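/- Let (X, δ_X) and (Y, δ_Y) be diversities such that X is separable with a dense subset D (with respect to the induced metric), and Y is complete (its induced metric space is complete). Then any isomorphism from D into Y — i.e., any map φ : D → Y with δ_Y(φ(A)) = δ_X(A) for all finite A ⊆ D — extends to a map φ̄ : X → Y with δ_Y(φ̄(A)) = δ_X(A) for all finite A ⊆ X. -/

import Mathlib

open scoped Classical

/-- A diversity on `X`: a real-valued function on finite subsets satisfying
(D1) nonnegativity with `δ A = 0 ↔ |A| ≤ 1`, and (D2) the triangle inequality. -/
structure Diversity (X : Type*) where
  δ : Finset X → ℝ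
  nonneg : ∀ A : Finset X, 0 ≤ δ A
  eq_zero_iff : ∀ A : Finset X, δ A = 0 ↔ A.card ≤ 1
  triangle : ∀ A B C : Finset X, B.Nonempty → δ (A ∪ C) ≤ δ (A ∪ B) + δ (B ∪ C)

/-- An admissible function on a diversity (a one-point extension). -/
structure IsAdmissible {X : Type*} (D : Diversity X) (f : Finset X → ℝ) : Prop where
  empty : f ∅ = 0
  le : ∀ A : Finset X, D.δ A ≤ f A
  tri : ∀ A B C : Finset X, C.Nonempty → f (A ∪ B) ≤ f (A ∪ C) + D.δ (B ∪ C)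
  subadd : ∀ A B : Finset X, f (A ∪ B) ≤ f A + f B

/-- Restriction of a diversity to a subset. -/
noncomputable def Diversity.restrict {X : Type*} (D : Diversity X) (S : Set X) : Diversity S where
  δ A := D.δ (A.image Subtype.val)
  nonneg A := D.nonneg _
  eq_zero_iff A := by
    rw [D.eq_zero_iff, Finset.card_image_of_injective _ Subtype.val_injective]
  triangle A B C hB := by
    have h := D.triangle (A.image Subtype.val) (B.image Subtype.val) (C.image Subtype.val)
      (hB.image _)
    simpa [Finset.image_union] using h

/-- Separability of the induced metric `d a b = δ {a, b}`. -/
def Diversity.SeparableD {X : Type*} (D : Diversity X) : Prop :=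
  ∃ s : Set X, s.Countable ∧ ∀ x : X, ∀ ε : ℝ, 0 < ε → ∃ y ∈ s, D.δ {x, y} < ε

/-- Completeness of the induced metric `d a b = δ {a, b}`. -/
def Diversity.CompleteD {X : Type*} (D : Diversity X) : Prop :=
  ∀ u : ℕ → X, (∀ ε : ℝ, 0 < ε → ∃ N : ℕ, ∀ m ≥ N, ∀ n ≥ N, D.δ {u m, u n} < ε) →
    ∃ x : X, ∀ ε : ℝ, 0 < ε → ∃ N : ℕ, ∀ n ≥ N, D.δ {u n, x} < ε

/-- The diversity `δ̂` on (finite sets of) admissible functions. -/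
noncomputable def hatδ {X : Type*} (F : Finset (Finset X → ℝ)) : ℝ :=
  if F.card ≤ 1 then 0
  else sSup { r : ℝ | ∃ j ∈ F, ∃ A : (Finset X → ℝ) → Finset X,
    r = j ((F.erase j).biUnion A) - ∑ i ∈ F.erase j, i (A i) }

/-- The canonical maximal extension `f_S^X` of an admissible function on `S ⊆ X`. -/
noncomputable def extFun {X : Type*} (D : Diversity X) (S : Set X) (f : Finset S → ℝ)
    (A : Finset X) : ℝ :=
  sInf { r : ℝ | ∃ (B : Finset S) (As : S → Finset X),
    B.biUnion As = A ∧ r = f B + ∑ b ∈ B, D.δ (insert (b : X) (As b)) }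

/-- An admissible function is finitely supported if it is the canonical extension
of an admissible function on some finite nonempty `S ⊆ X`. -/
def FinitelySupported {X : Type*} (D : Diversity X) (f : Finset X → ℝ) : Prop :=
  ∃ S : Set X, S.Finite ∧ S.Nonempty ∧ ∃ g : Finset S → ℝ,
    IsAdmissible (D.restrict S) g ∧ f = extFun D S g

/-- The extension property for a diversity. -/
def Diversity.ExtensionProp {X : Type*} (D : Diversity X) : Prop :=
  ∀ F : Finset X, ∀ f : Finset ((F : Set X)) → ℝ,
    IsAdmissible (D.restrict (F : Set X)) f →
    ∃ x : X, ∀ A : Finset ((F : Set X)), D.δ (insert x (A.image Subtype.val)) = f A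

/-- The approximate extension property for a diversity. -/
def Diversity.ApproxExtensionProp {X : Type*} (D : Diversity X) : Prop :=
  ∀ F : Finset X, ∀ f : Finset ((F : Set X)) → ℝ,
    IsAdmissible (D.restrict (F : Set X)) f →
    ∀ ε : ℝ, 0 < ε →
      ∃ x : X, ∀ A : Finset ((F : Set X)), |D.δ (insert x (A.image Subtype.val)) - f A| ≤ ε

/-- Ultrahomogeneity: isomorphisms between finite subsets extend to automorphisms. -/
def Diversity.Ultrahomogeneous {X : Type*} (D : Diversity X) : Prop :=
  ∀ (A A' : Finset X) (φ : ((A : Set X)) → ((A' : Set X))), Function.Bijective φ →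
    (∀ B : Finset ((A : Set X)),
      D.δ (B.image (fun b => (φ b : X))) = D.δ (B.image Subtype.val)) →
    ∃ Φ : X → X, Function.Bijective Φ ∧ (∀ C : Finset X, D.δ (C.image Φ) = D.δ C) ∧
      ∀ a : ((A : Set X)), Φ a = (φ a : X)
section Aux

variable {Z : Type*} (D : Diversity Z)

lemma div_swap (a a' : Z) (C : Finset Z) :
    D.δ (insert a C) ≤ D.δ {a, a'} + D.δ (insert a' C) := by
  have h := D.triangle {a} {a'} C (Finset.singleton_nonempty _)
  rw [← Finset.insert_eq, ← Finset.insert_eq, ← Finset.insert_eq] at h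
  exact h

lemma div_perturb {α : Type*} (f g : α → Z) (A : Finset α) :
    ∀ B : Finset Z, D.δ (B ∪ A.image f) ≤ D.δ (B ∪ A.image g) + ∑ a ∈ A, D.δ {f a, g a} := by
  classical
  induction A using Finset.induction with
  | empty => simp
  | @insert a A ha ih =>
    intro B
    rw [Finset.image_insert, Finset.image_insert, Finset.union_insert, Finset.union_insert,
      Finset.sum_insert ha]
    have h1 := div_swap D (f a) (g a) (B ∪ A.image f)
    have h2 := ih (insert (g a) B)
    rw [Finset.insert_union] at h2
    have h3 : insert (g a) (B ∪ A.image g) = insert (g a) B ∪ A.image g := by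
      rw [Finset.insert_union]
    calc D.δ (insert (f a) (B ∪ A.image f))
        ≤ D.δ {f a, g a} + D.δ (insert (g a) (B ∪ A.image f)) := h1
      _ ≤ D.δ {f a, g a} + (D.δ (insert (g a) B ∪ A.image g) + ∑ x ∈ A, D.δ {f x, g x}) := by
          linarith
      _ = D.δ (insert (g a) (B ∪ A.image g)) + (D.δ {f a, g a} + ∑ x ∈ A, D.δ {f x, g x}) := by
          rw [h3]; ring

lemma div_abs_perturb {α : Type*} (f g : α → Z) (A : Finset α) :
    |D.δ (A.image f) - D.δ (A.image g)| ≤ ∑ a ∈ A, D.δ {f a, g a} := by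
  rw [abs_sub_le_iff]
  constructor
  · have h := div_perturb D f g A ∅
    simp only [Finset.empty_union] at h
    linarith
  · have h := div_perturb D g f A ∅
    simp only [Finset.empty_union] at h
    have hsum : ∑ a ∈ A, D.δ {g a, f a} = ∑ a ∈ A, D.δ {f a, g a} := by
      refine Finset.sum_congr rfl fun a _ => by rw [Finset.pair_comm]
    rw [hsum] at h
    linarith

end Aux

/-- An isomorphism from a countable dense subset of a separable diversity into a
complete diversity extends to an isomorphism of the whole space. -/
theorem stmt9 {X Y : Type*} (DX : Diversity X) (DY : Diversity Y)
    (S : Set X) (hcount : S.Countable)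
    (hdense : ∀ x : X, ∀ ε : ℝ, 0 < ε → ∃ y ∈ S, DX.δ {x, y} < ε)
    (hYc : DY.CompleteD)
    (φ : S → Y)
    (hφ : ∀ A : Finset S, DY.δ (A.image φ) = DX.δ (A.image Subtype.val)) :
    ∃ ψ : X → Y, (∀ A : Finset X, DY.δ (A.image ψ) = DX.δ A) ∧ ∀ d : S, ψ d = φ d := by
  classical
  -- pairwise isometry
  have hφpair : ∀ s t : S, DY.δ {φ s, φ t} = DX.δ {(s : X), (t : X)} := by
    intro s t
    have h := hφ {s, t}
    simpa using h
  -- choose approximating sequences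
  have hex : ∀ x : X, ∀ n : ℕ, ∃ y : S, DX.δ {x, (y : X)} < 1 / (n + 1) := by
    intro x n
    obtain ⟨y, hy, h⟩ := hdense x (1 / (n + 1)) (by positivity)
    exact ⟨⟨y, hy⟩, h⟩
  choose seq hseq using hex
  -- metric triangle inequality
  have tri : ∀ (Z : Type _) (D : Diversity Z) (a b c : Z),
      D.δ {a, c} ≤ D.δ {a, b} + D.δ {b, c} := by
    intro Z D a b c
    have h := D.triangle {a} {b} {c} (Finset.singleton_nonempty _)
    rw [← Finset.insert_eq, ← Finset.insert_eq, ← Finset.insert_eq] at h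
    exact h
  -- the sequences are Cauchy in Y, get limits
  have hcauchy : ∀ x : X, ∃ y : Y, ∀ ε : ℝ, 0 < ε → ∃ N : ℕ, ∀ n ≥ N,
      DY.δ {φ (seq x n), y} < ε := by
    intro x
    apply hYc (fun n => φ (seq x n))
    intro ε hε
    obtain ⟨N, hN⟩ := exists_nat_one_div_lt (show (0:ℝ) < ε / 2 by linarith)
    refine ⟨N, fun m hm n hn => ?_⟩
    have h1 : DX.δ {(seq x m : X), (seq x n : X)} ≤
        DX.δ {(seq x m : X), x} + DX.δ {x, (seq x n : X)} := tri X DX _ _ _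
    have h2 : DX.δ {(seq x m : X), x} = DX.δ {x, (seq x m : X)} := by rw [Finset.pair_comm]
    have h3 : DX.δ {x, (seq x m : X)} < 1 / (m + 1) := hseq x m
    have h4 : DX.δ {x, (seq x n : X)} < 1 / (n + 1) := hseq x n
    have h5 : (1 : ℝ) / (m + 1) ≤ 1 / (N + 1) := by
      apply one_div_le_one_div_of_le (by positivity)
      exact_mod_cast Nat.succ_le_succ hm
    have h6 : (1 : ℝ) / (n + 1) ≤ 1 / (N + 1) := by
      apply one_div_le_one_div_of_le (by positivity)
      exact_mod_cast Nat.succ_le_succ hn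
    rw [hφpair]
    linarith
  choose lim hlim using hcauchy
  set ψ : X → Y := fun x => if h : x ∈ S then φ ⟨x, h⟩ else lim x with hψdef
  have hψd : ∀ d : S, ψ d = φ d := by
    intro d
    simp only [hψdef, dif_pos d.2]
  -- convergence to ψ x in all cases
  have hconv : ∀ x : X, ∀ ε : ℝ, 0 < ε → ∃ N : ℕ, ∀ n ≥ N,
      DY.δ {φ (seq x n), ψ x} < ε := by
    intro x ε hε
    by_cases h : x ∈ S
    · obtain ⟨N, hN⟩ := exists_nat_one_div_lt hε
      refine ⟨N, fun n hn => ?_⟩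
      have : ψ x = φ ⟨x, h⟩ := by simp only [hψdef, dif_pos h]
      rw [this, hφpair]
      have h2 : DX.δ {(seq x n : X), x} = DX.δ {x, (seq x n : X)} := by rw [Finset.pair_comm]
      have h6 : (1 : ℝ) / (n + 1) ≤ 1 / (N + 1) := by
        apply one_div_le_one_div_of_le (by positivity)
        exact_mod_cast Nat.succ_le_succ hn
      have := hseq x n
      rw [h2]
      linarith
    · have : ψ x = lim x := by simp only [hψdef, dif_neg h]
      rw [this]
      exact hlim x ε hε
  refine ⟨ψ, ?_, hψd⟩
  intro A
  -- show |δY(ψ A) - δX A| ≤ ε for every ε > 0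
  have key : ∀ ε : ℝ, 0 < ε → |DY.δ (A.image ψ) - DX.δ A| ≤ ε := by
    intro ε hε
    set ε' : ℝ := ε / (2 * (A.card + 1)) with hε'def
    have hε' : 0 < ε' := by positivity
    have hNf : ∀ a : X, ∃ N : ℕ, ∀ n ≥ N, DY.δ {φ (seq a n), ψ a} < ε' :=
      fun a => hconv a ε' hε'
    choose Nf hNfs using hNf
    obtain ⟨N0, hN0⟩ := exists_nat_one_div_lt hε'
    set n : ℕ := (A.sup Nf) ⊔ N0 with hndef
    have t23 : DY.δ (A.image (fun a => φ (seq a n))) =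
        DX.δ (A.image (fun a => ((seq a n : X)))) := by
      have h := hφ (A.image (fun a => seq a n))
      simpa [Finset.image_image, Function.comp_def] using h
    have b12 : |DY.δ (A.image ψ) - DY.δ (A.image (fun a => φ (seq a n)))| ≤
        ∑ a ∈ A, DY.δ {ψ a, φ (seq a n)} := div_abs_perturb DY _ _ A
    have b34 : |DX.δ (A.image (fun a => ((seq a n : X)))) - DX.δ A| ≤
        ∑ a ∈ A, DX.δ {(seq a n : X), a} := by
      have h := div_abs_perturb DX (fun a : X => ((seq a n : X))) id A
      simpa using h
    have s12 : ∑ a ∈ A, DY.δ {ψ a, φ (seq a n)} ≤ A.card * ε' := by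
      have h := Finset.sum_le_card_nsmul A (fun a => DY.δ {ψ a, φ (seq a n)}) ε' ?_
      · simpa [nsmul_eq_mul] using h
      · intro a ha
        rw [Finset.pair_comm]
        exact le_of_lt (hNfs a n (le_trans (Finset.le_sup ha) le_sup_left))
    have s34 : ∑ a ∈ A, DX.δ {(seq a n : X), a} ≤ A.card * ε' := by
      have h := Finset.sum_le_card_nsmul A (fun a => DX.δ {(seq a n : X), a}) ε' ?_
      · simpa [nsmul_eq_mul] using h
      · intro a ha
        rw [Finset.pair_comm]
        have h3 : DX.δ {a, (seq a n : X)} < 1 / (n + 1) := hseq a n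
        have h6 : (1 : ℝ) / (n + 1) ≤ 1 / (N0 + 1) := by
          apply one_div_le_one_div_of_le (by positivity)
          exact_mod_cast Nat.succ_le_succ (le_sup_right : N0 ≤ n)
        linarith
    have habs : |DY.δ (A.image ψ) - DX.δ A| ≤
        |DY.δ (A.image ψ) - DY.δ (A.image (fun a => φ (seq a n)))| +
        |DY.δ (A.image (fun a => φ (seq a n))) - DX.δ A| := abs_sub_le _ _ _
    have h2' : |DY.δ (A.image (fun a => φ (seq a n))) - DX.δ A| =
        |DX.δ (A.image (fun a => ((seq a n : X)))) - DX.δ A| := by rw [t23]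
    have hcard : (0 : ℝ) ≤ A.card := by positivity
    have hfin : 2 * ((A.card : ℝ) + 1) * ε' = ε := by
      rw [hε'def]
      field_simp
    rw [h2'] at habs
    nlinarith [abs_nonneg (DY.δ (A.image ψ) - DY.δ (A.image (fun a => φ (seq a n))))]
  by_contra hne
  have hpos : 0 < |DY.δ (A.image ψ) - DX.δ A| := by
    rw [abs_pos, sub_ne_zero]
    exact hne
  have := key (|DY.δ (A.image ψ) - DX.δ A| / 2) (by linarith)
  linarith
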